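/- Let t be a positive integer and let 𝓐 ⊆ C([n],k) be t-intersecting. Then for every 1 ≤ i < j ≤ n, ζ_{k−1}(Δ_{ij}(𝓐)) ≥ ζ_{k−1}(𝓐). -/

import Mathlib

open Finset

/-- `[n] = {1, …, n}` as a finset of naturals. -/
def Iv (n : ℕ) : Finset ℕ := Finset.Icc 1 n

/-- The collection of `k`-element subsets of `[n]`. -/
def KSets (n k : ℕ) : Finset (Finset ℕ) := (Iv n).powersetCard k

/-- Codegree of `E` in the family `F`: the number of members of `F` containing `E`. -/
def codeg (F : Finset (Finset ℕ)) (E : Finset ℕ) : ℕ :=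
  (F.filter fun A => E ⊆ A).card

/-- Codegree squared sum of a `k`-uniform family on `[n]`. -/
def co2 (n k : ℕ) (F : Finset (Finset ℕ)) : ℕ :=
  ∑ E ∈ KSets n (k - 1), codeg F E ^ 2

/-- `t`-intersecting family. -/
def IntersectingT (t : ℕ) (F : Finset (Finset ℕ)) : Prop :=
  ∀ A ∈ F, ∀ B ∈ F, t ≤ (A ∩ B).card

/-- `ζ_u(F)`: the number of unordered pairs of distinct members of `F` meeting in
exactly `u` elements. -/
def zeta (u : ℕ) (F : Finset (Finset ℕ)) : ℕ :=
  ((F.offDiag.filter fun p => (p.1 ∩ p.2).card = u).image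
    fun p => ({p.1, p.2} : Finset (Finset ℕ))).card

/-- `ζ_{u,v}(𝓖,𝓗)`: the number of unordered pairs `{F,G}` with `F ∈ 𝓖`, `G ∈ 𝓗`,
`|F| = |G| = u+1`, `|F ∩ G| = u` and `v ∈ F ∩ G`. -/
def zeta2v (u v : ℕ) (G H : Finset (Finset ℕ)) : ℕ :=
  (((G ×ˢ H).filter fun p =>
      p.1.card = u + 1 ∧ p.2.card = u + 1 ∧ (p.1 ∩ p.2).card = u ∧ v ∈ p.1 ∩ p.2).image
    fun p => ({p.1, p.2} : Finset (Finset ℕ))).card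

/-- The Hilton–Milner type family `H(n,k,t)`. -/
def HM (n k t : ℕ) : Finset (Finset ℕ) :=
  ((KSets n k).filter fun F => Iv t ⊆ F ∧ (F ∩ Finset.Icc (t + 1) (k + 1)).Nonempty) ∪
    ((Iv t).image fun i => (Iv (k + 1)).erase i)

/-- The Frankl type family `A(n,k,t)`. -/
def AK (n k t : ℕ) : Finset (Finset ℕ) :=
  (KSets n k).filter fun F => t + 1 ≤ (F ∩ Iv (t + 2)).card

/-- Two families on `[n]` are isomorphic if one is the image of the other under a
permutation of `[n]` applied elementwise to each member. -/
def Isom (n : ℕ) (F G : Finset (Finset ℕ)) : Prop :=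
  ∃ σ : Equiv.Perm ℕ, (∀ x ∈ Iv n, σ x ∈ Iv n) ∧ G = F.image fun A => A.image σ

/-- The elementary shift `δ_{ij}` of a single set. -/
def shiftSet (i j : ℕ) (𝓐 : Finset (Finset ℕ)) (A : Finset ℕ) : Finset ℕ :=
  if j ∈ A ∧ i ∉ A ∧ insert i (A.erase j) ∉ 𝓐 then insert i (A.erase j) else A

/-- The shift operation `Δ_{ij}` on families. -/
def shiftFam (i j : ℕ) (𝓐 : Finset (Finset ℕ)) : Finset (Finset ℕ) :=
  𝓐.image (shiftSet i j 𝓐)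

/-- Left-compressed family. -/
def LeftCompressed (n : ℕ) (F : Finset (Finset ℕ)) : Prop :=
  ∀ i j : ℕ, 1 ≤ i → i < j → j ≤ n → shiftFam i j F = F

/-- `g` is a generating set of `F ⊆ C([n],k)`: its members are subsets of `[n]` of size at
most `k`, and `U(g) ∩ C([n],k) = F`. -/
def IsGenSet (n k : ℕ) (F g : Finset (Finset ℕ)) : Prop :=
  (∀ E ∈ g, E ⊆ Iv n ∧ E.card ≤ k) ∧
    (KSets n k).filter (fun A => ∃ E ∈ g, E ⊆ A) = F

/-- `s⁺` of a collection of finsets: the maximum element appearing. -/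
def sPlus (g : Finset (Finset ℕ)) : ℕ := g.sup fun E => E.sup id

/-- `g*_i`: the members of `g` of size `i` containing `s`. -/
def gStar (g : Finset (Finset ℕ)) (s i : ℕ) : Finset (Finset ℕ) :=
  g.filter fun E => s ∈ E ∧ E.card = i

/-- `𝒟(ℰ) = ∪_{E ∈ ℰ} {B ∈ C([n],k) : B ∩ [s⁺(E)] = E}`. -/
def Dcal (n k : ℕ) (ℰ : Finset (Finset ℕ)) : Finset (Finset ℕ) :=
  (KSets n k).filter fun B => ∃ E ∈ ℰ, B ∩ Iv (E.sup id) = E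

/-- The family of `k`-subsets of `[n]` generated by `g`. -/
def genFam (n k : ℕ) (g : Finset (Finset ℕ)) : Finset (Finset ℕ) :=
  (KSets n k).filter fun A => ∃ E ∈ g, E ⊆ A

/-- Integer binomial coefficient: `C(a,b) = 0` when `b < 0` or `b > a`. -/
def ichoose (a b : ℤ) : ℤ :=
  if 0 ≤ b ∧ b ≤ a then (a.toNat.choose b.toNat : ℤ) else 0

section ShiftAux

private lemma choose_two_add (a b : ℕ) :
    (a + b).choose 2 = a.choose 2 + b.choose 2 + a * b := by
  induction b with
  | zero => simp
  | succ b ih =>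
    have h1 : a + (b + 1) = (a + b) + 1 := by omega
    rw [h1, Nat.choose_succ_succ, Nat.choose_one_right, ih,
      Nat.choose_succ_succ b 1, Nat.choose_one_right]
    ring

private lemma choose_two_ineq {a b c : ℕ} (h : a ≤ c) :
    (a + b).choose 2 + c.choose 2 ≤ a.choose 2 + (c + b).choose 2 := by
  rw [choose_two_add, choose_two_add]
  have := Nat.mul_le_mul_right b h
  omega

variable {i j : ℕ} {𝓐 : Finset (Finset ℕ)}

private lemma shiftSet_of_cond {A : Finset ℕ}
    (h : j ∈ A ∧ i ∉ A ∧ insert i (A.erase j) ∉ 𝓐) :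
    shiftSet i j 𝓐 A = insert i (A.erase j) := by
  unfold shiftSet; rw [if_pos h]

private lemma shiftSet_of_not_cond {A : Finset ℕ}
    (h : ¬(j ∈ A ∧ i ∉ A ∧ insert i (A.erase j) ∉ 𝓐)) :
    shiftSet i j 𝓐 A = A := by
  unfold shiftSet; rw [if_neg h]

private lemma not_mem_shift {A : Finset ℕ} (hji : i ≠ j) :
    j ∉ insert i (A.erase j) := by
  intro h
  rcases Finset.mem_insert.mp h with h' | h'
  · exact hji h'.symm
  · exact (Finset.mem_erase.mp h').1 rfl

private lemma recover {A : Finset ℕ} (hji : i ≠ j) (hjA : j ∈ A) (hiA : i ∉ A) :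
    insert j ((insert i (A.erase j)).erase i) = A := by
  rw [Finset.erase_insert (fun h => hiA (Finset.mem_of_mem_erase h)),
    Finset.insert_erase hjA]

private lemma shiftSet_injOn (hji : i ≠ j) :
    Set.InjOn (shiftSet i j 𝓐) 𝓐 := by
  intro A hA B hB hAB
  by_cases hA1 : j ∈ A ∧ i ∉ A ∧ insert i (A.erase j) ∉ 𝓐 <;>
    by_cases hB1 : j ∈ B ∧ i ∉ B ∧ insert i (B.erase j) ∉ 𝓐
  · rw [shiftSet_of_cond hA1, shiftSet_of_cond hB1] at hAB
    rw [← recover hji hA1.1 hA1.2.1, hAB, recover hji hB1.1 hB1.2.1]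
  · rw [shiftSet_of_cond hA1, shiftSet_of_not_cond hB1] at hAB
    exact absurd (hAB ▸ hB) hA1.2.2
  · rw [shiftSet_of_not_cond hA1, shiftSet_of_cond hB1] at hAB
    exact absurd (hAB ▸ hA) hB1.2.2
  · rwa [shiftSet_of_not_cond hA1, shiftSet_of_not_cond hB1] at hAB

private lemma codeg_shiftFam (hji : i ≠ j) (E : Finset ℕ) :
    codeg (shiftFam i j 𝓐) E = (𝓐.filter fun A => E ⊆ shiftSet i j 𝓐 A).card := by
  unfold codeg shiftFam
  rw [Finset.filter_image]
  apply Finset.card_image_of_injOn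
  exact (shiftSet_injOn hji).mono (fun x hx => Finset.mem_of_mem_filter x hx)

private lemma codeg_shiftFam_eq (hji : i ≠ j) {E : Finset ℕ} (h : i ∈ E ↔ j ∈ E) :
    codeg (shiftFam i j 𝓐) E = codeg 𝓐 E := by
  rw [codeg_shiftFam hji]
  unfold codeg
  congr 1
  apply Finset.filter_congr
  intro A _
  by_cases hcd : j ∈ A ∧ i ∉ A ∧ insert i (A.erase j) ∉ 𝓐
  · rw [shiftSet_of_cond hcd]
    by_cases hjE : j ∈ E
    · constructor
      · intro hEA'; exact absurd (hEA' hjE) (not_mem_shift hji)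
      · intro hEA; exact absurd (hEA (h.mpr hjE)) hcd.2.1
    · have hiE : i ∉ E := fun hh => hjE (h.mp hh)
      constructor
      · intro hs x hx
        rcases Finset.mem_insert.mp (hs hx) with rfl | h2
        · exact absurd hx hiE
        · exact (Finset.mem_erase.mp h2).2
      · intro hs x hx
        exact Finset.mem_insert_of_mem
          (Finset.mem_erase.mpr ⟨fun hxe => hjE (hxe ▸ hx), hs hx⟩)
  · rw [shiftSet_of_not_cond hcd]

private lemma codeg_split (E : Finset ℕ) :
    codeg 𝓐 E
      = (𝓐.filter fun A => E ⊆ A ∧ ¬(j ∈ A ∧ i ∉ A ∧ insert i (A.erase j) ∉ 𝓐)).card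
        + (𝓐.filter fun A => E ⊆ A ∧ (j ∈ A ∧ i ∉ A ∧ insert i (A.erase j) ∉ 𝓐)).card := by
  have h := Finset.card_filter_add_card_filter_not
    (s := 𝓐.filter fun A => E ⊆ A)
    (p := fun A => j ∈ A ∧ i ∉ A ∧ insert i (A.erase j) ∉ 𝓐)
  rw [Finset.filter_filter, Finset.filter_filter] at h
  unfold codeg
  omega

private lemma codeg_shift_j (hji : i ≠ j) {E : Finset ℕ} (hjE : j ∈ E) :
    codeg (shiftFam i j 𝓐) E
      = (𝓐.filter fun A => E ⊆ A ∧ ¬(j ∈ A ∧ i ∉ A ∧ insert i (A.erase j) ∉ 𝓐)).card := by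
  rw [codeg_shiftFam hji]
  congr 1
  apply Finset.filter_congr
  intro A _
  by_cases hcd : j ∈ A ∧ i ∉ A ∧ insert i (A.erase j) ∉ 𝓐
  · rw [shiftSet_of_cond hcd]
    constructor
    · intro hEA'; exact absurd (hEA' hjE) (not_mem_shift hji)
    · intro h; exact absurd hcd h.2
  · rw [shiftSet_of_not_cond hcd]
    exact ⟨fun h => ⟨h, hcd⟩, fun h => h.1⟩

private lemma codeg_shift_i (hji : i ≠ j) {E : Finset ℕ} (hjE : j ∈ E) (hiE : i ∉ E) :
    codeg (shiftFam i j 𝓐) (insert i (E.erase j))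
      = codeg 𝓐 (insert i (E.erase j))
        + (𝓐.filter fun A => E ⊆ A ∧ (j ∈ A ∧ i ∉ A ∧ insert i (A.erase j) ∉ 𝓐)).card := by
  rw [codeg_shiftFam hji]
  have hset : (𝓐.filter fun A => insert i (E.erase j) ⊆ shiftSet i j 𝓐 A)
      = (𝓐.filter fun A => insert i (E.erase j) ⊆ A)
        ∪ (𝓐.filter fun A => E ⊆ A ∧ (j ∈ A ∧ i ∉ A ∧ insert i (A.erase j) ∉ 𝓐)) := by
    rw [← Finset.filter_or]
    apply Finset.filter_congr
    intro A _
    by_cases hcd : j ∈ A ∧ i ∉ A ∧ insert i (A.erase j) ∉ 𝓐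
    · rw [shiftSet_of_cond hcd]
      constructor
      · intro h
        right
        refine ⟨?_, hcd⟩
        intro x hx
        by_cases hxj : x = j
        · exact hxj ▸ hcd.1
        · have hx' : x ∈ insert i (E.erase j) :=
            Finset.mem_insert_of_mem (Finset.mem_erase.mpr ⟨hxj, hx⟩)
          rcases Finset.mem_insert.mp (h hx') with rfl | h2
          · exact absurd hx hiE
          · exact (Finset.mem_erase.mp h2).2
      · rintro (h | ⟨hEA, _⟩)
        · exact absurd (h (Finset.mem_insert_self i _)) hcd.2.1
        · intro x hx
          rcases Finset.mem_insert.mp hx with rfl | h2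
          · exact Finset.mem_insert_self x _
          · obtain ⟨hxj, hxE⟩ := Finset.mem_erase.mp h2
            exact Finset.mem_insert_of_mem (Finset.mem_erase.mpr ⟨hxj, hEA hxE⟩)
    · rw [shiftSet_of_not_cond hcd]
      constructor
      · intro h; exact Or.inl h
      · rintro (h | ⟨_, hcd'⟩)
        · exact h
        · exact absurd hcd' hcd
  rw [hset, Finset.card_union_of_disjoint]
  · rfl
  · rw [Finset.disjoint_left]
    intro A hA hA'
    have h1 : i ∈ A := (Finset.mem_filter.mp hA).2 (Finset.mem_insert_self i _)
    exact (Finset.mem_filter.mp hA').2.2.2.1 h1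

private lemma x0_le_y (hji : i ≠ j) {E : Finset ℕ} (hjE : j ∈ E) (hiE : i ∉ E) :
    (𝓐.filter fun A => E ⊆ A ∧ ¬(j ∈ A ∧ i ∉ A ∧ insert i (A.erase j) ∉ 𝓐)).card
      ≤ codeg 𝓐 (insert i (E.erase j)) := by
  apply Finset.card_le_card_of_injOn (fun A => if i ∈ A then A else insert i (A.erase j))
  · intro A hA
    simp only [Finset.mem_coe, Finset.mem_filter] at hA
    simp only [Finset.mem_coe]
    obtain ⟨hA𝓐, hEA, hnc⟩ := hA
    by_cases hiA : i ∈ A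
    · rw [if_pos hiA]
      refine Finset.mem_filter.mpr ⟨hA𝓐, ?_⟩
      exact Finset.insert_subset hiA ((Finset.erase_subset _ _).trans hEA)
    · rw [if_neg hiA]
      have hjA : j ∈ A := hEA hjE
      have hA' : insert i (A.erase j) ∈ 𝓐 := by
        by_contra h; exact hnc ⟨hjA, hiA, h⟩
      refine Finset.mem_filter.mpr ⟨hA', ?_⟩
      exact Finset.insert_subset_insert i (Finset.erase_subset_erase j hEA)
  · intro A hA B hB h
    simp only at h
    simp only [Finset.mem_coe, Finset.mem_filter] at hA hB
    have hjA : j ∈ A := hA.2.1 hjE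
    have hjB : j ∈ B := hB.2.1 hjE
    by_cases hiA : i ∈ A <;> by_cases hiB : i ∈ B
    · rwa [if_pos hiA, if_pos hiB] at h
    · rw [if_pos hiA, if_neg hiB] at h
      exact absurd (h ▸ hjA) (not_mem_shift hji)
    · rw [if_neg hiA, if_pos hiB] at h
      exact absurd (h.symm ▸ hjB) (not_mem_shift hji)
    · rw [if_neg hiA, if_neg hiB] at h
      rw [← recover hji hjA hiA, h, recover hji hjB hiB]

private lemma key_ineq (hji : i ≠ j) {E : Finset ℕ} (hjE : j ∈ E) (hiE : i ∉ E) :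
    (codeg 𝓐 E).choose 2 + (codeg 𝓐 (insert i (E.erase j))).choose 2 ≤
      (codeg (shiftFam i j 𝓐) E).choose 2 +
        (codeg (shiftFam i j 𝓐) (insert i (E.erase j))).choose 2 := by
  rw [codeg_split (i := i) (j := j) E, codeg_shift_j hji hjE, codeg_shift_i hji hjE hiE]
  exact choose_two_ineq (x0_le_y hji hjE hiE)

end ShiftAux
private lemma zeta_eq (n k : ℕ) (hk : 0 < k) (F : Finset (Finset ℕ)) (hF : F ⊆ KSets n k) :
    zeta (k - 1) F = ∑ E ∈ KSets n (k - 1), (codeg F E).choose 2 := by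
  have hcard : ∀ A ∈ F, A ⊆ Iv n ∧ A.card = k := by
    intro A hA
    have := hF hA
    rwa [KSets, Finset.mem_powersetCard] at this
  have hinter : ∀ A ∈ F, ∀ B ∈ F, A ≠ B → (A ∩ B).card ≤ k - 1 := by
    intro A hA B hB hne
    have h1 : (A ∩ B).card ≤ k := (hcard A hA).2 ▸ Finset.card_le_card Finset.inter_subset_left
    have h2 : (A ∩ B).card ≠ k := by
      intro h
      have hAB : A ∩ B = A := Finset.eq_of_subset_of_card_le Finset.inter_subset_left
        (by rw [h, (hcard A hA).2])
      have : A = B := Finset.eq_of_subset_of_card_le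
        (hAB ▸ Finset.inter_subset_right) (by rw [(hcard A hA).2, (hcard B hB).2])
      exact hne this
    omega
  have hdet : ∀ (E : Finset ℕ) (S : Finset (Finset ℕ)), E ∈ KSets n (k-1) →
      S ∈ (F.filter fun A => E ⊆ A).powersetCard 2 →
      ∃ A B : Finset ℕ, A ≠ B ∧ S = {A, B} ∧ E = A ∩ B ∧
        (A, B) ∈ F.offDiag ∧ (A ∩ B).card = k - 1 := by
    intro E S hE hS
    rw [Finset.mem_powersetCard] at hS
    obtain ⟨A, B, hne, rfl⟩ := Finset.card_eq_two.mp hS.2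
    have hA' : A ∈ F ∧ E ⊆ A := Finset.mem_filter.mp (hS.1 (Finset.mem_insert_self A {B}))
    have hB' : B ∈ F ∧ E ⊆ B := Finset.mem_filter.mp
      (hS.1 (Finset.mem_insert_of_mem (Finset.mem_singleton_self B)))
    have hEk : E.card = k - 1 := by
      rw [KSets, Finset.mem_powersetCard] at hE; exact hE.2
    have hEsub : E ⊆ A ∩ B := Finset.subset_inter hA'.2 hB'.2
    have hle : (A ∩ B).card ≤ k - 1 := hinter A hA'.1 B hB'.1 hne
    have hEeq : E = A ∩ B := Finset.eq_of_subset_of_card_le hEsub (by omega)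
    refine ⟨A, B, hne, rfl, hEeq, Finset.mem_offDiag.mpr ⟨hA'.1, hB'.1, hne⟩, ?_⟩
    rw [← hEeq, hEk]
  have hR : ∑ E ∈ KSets n (k-1), (codeg F E).choose 2
      = ((KSets n (k-1)).sigma fun E => (F.filter fun A => E ⊆ A).powersetCard 2).card := by
    rw [Finset.card_sigma]
    refine Finset.sum_congr rfl fun E _ => ?_
    rw [Finset.card_powersetCard]
    rfl
  rw [hR]
  unfold zeta
  refine (Finset.card_bij (fun p _ => p.2) ?_ ?_ ?_).symm
  · rintro ⟨E, S⟩ hp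
    rw [Finset.mem_sigma] at hp
    obtain ⟨A, B, hne, rfl, hEeq, hoff, hcAB⟩ := hdet E S hp.1 hp.2
    exact Finset.mem_image.mpr ⟨(A, B), Finset.mem_filter.mpr ⟨hoff, hcAB⟩, rfl⟩
  · rintro ⟨E₁, S₁⟩ h₁ ⟨E₂, S₂⟩ h₂ h
    simp only at h
    rw [Finset.mem_sigma] at h₁ h₂
    obtain ⟨A, B, hne, hSeq, hEeq, _, hcAB⟩ := hdet E₁ S₁ h₁.1 h₁.2
    subst h
    have hS₂ := (Finset.mem_powersetCard.mp h₂.2).1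
    have hA2 := Finset.mem_filter.mp (hS₂ (hSeq ▸ Finset.mem_insert_self A {B}))
    have hB2 := Finset.mem_filter.mp
      (hS₂ (hSeq ▸ Finset.mem_insert_of_mem (Finset.mem_singleton_self B)))
    have hE₂sub : E₂ ⊆ A ∩ B := Finset.subset_inter hA2.2 hB2.2
    have hE₂k : E₂.card = k - 1 := by
      have := h₂.1; rw [KSets, Finset.mem_powersetCard] at this; exact this.2
    have hE₂eq : E₂ = A ∩ B := Finset.eq_of_subset_of_card_le hE₂sub (by omega)
    have : E₁ = E₂ := by rw [hEeq, hE₂eq]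
    subst this
    rfl
  · intro S hS
    obtain ⟨p, hp, rfl⟩ := Finset.mem_image.mp hS
    rw [Finset.mem_filter] at hp
    obtain ⟨hoff, hcap⟩ := hp
    rw [Finset.mem_offDiag] at hoff
    refine ⟨⟨p.1 ∩ p.2, {p.1, p.2}⟩, ?_, rfl⟩
    rw [Finset.mem_sigma]
    constructor
    · rw [KSets, Finset.mem_powersetCard]
      exact ⟨Finset.inter_subset_left.trans (hcard p.1 hoff.1).1, hcap⟩
    · rw [Finset.mem_powersetCard]
      constructor
      · intro x hx
        rcases Finset.mem_insert.mp hx with rfl | hx'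
        · exact Finset.mem_filter.mpr ⟨hoff.1, Finset.inter_subset_left⟩
        · rw [Finset.mem_singleton] at hx'
          subst hx'
          exact Finset.mem_filter.mpr ⟨hoff.2.1, Finset.inter_subset_right⟩
      · exact Finset.card_pair hoff.2.2
/-- **Shifting does not decrease the number of pairs meeting in `k-1` elements.** -/
theorem stmt_5 (n k t : ℕ) (ht : 0 < t) (hk : 0 < k) (hkn : k ≤ n)
    (𝓐 : Finset (Finset ℕ)) (h𝓐 : 𝓐 ⊆ KSets n k) (hint : IntersectingT t 𝓐)
    (i j : ℕ) (hi : 1 ≤ i) (hij : i < j) (hjn : j ≤ n) :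
    zeta (k - 1) 𝓐 ≤ zeta (k - 1) (shiftFam i j 𝓐) := by
  have hji : i ≠ j := Nat.ne_of_lt hij
  have hiIv : i ∈ Iv n := by
    rw [Iv, Finset.mem_Icc]; exact ⟨hi, le_trans (le_of_lt hij) hjn⟩
  have hjIv : j ∈ Iv n := by
    rw [Iv, Finset.mem_Icc]; exact ⟨le_trans hi (le_of_lt hij), hjn⟩
  have hsub : shiftFam i j 𝓐 ⊆ KSets n k := by
    intro B hB
    rw [shiftFam, Finset.mem_image] at hB
    obtain ⟨A, hA, rfl⟩ := hB
    have hAk := h𝓐 hA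
    rw [KSets, Finset.mem_powersetCard] at hAk
    by_cases hcd : j ∈ A ∧ i ∉ A ∧ insert i (A.erase j) ∉ 𝓐
    · rw [shiftSet_of_cond hcd, KSets, Finset.mem_powersetCard]
      constructor
      · exact Finset.insert_subset hiIv ((Finset.erase_subset _ _).trans hAk.1)
      · rw [Finset.card_insert_of_notMem (fun h => hcd.2.1 (Finset.mem_of_mem_erase h)),
          Finset.card_erase_of_mem hcd.1, hAk.2]
        omega
    · rw [shiftSet_of_not_cond hcd]
      exact h𝓐 hA
  rw [zeta_eq n k hk 𝓐 h𝓐, zeta_eq n k hk _ hsub]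
  have split : ∀ c : Finset ℕ → ℕ,
      ∑ E ∈ KSets n (k-1), c E
        = (∑ E ∈ (KSets n (k-1)).filter (fun E => j ∈ E ∧ i ∉ E), c E
          + ∑ E ∈ (KSets n (k-1)).filter (fun E => i ∈ E ∧ j ∉ E), c E)
          + ∑ E ∈ (KSets n (k-1)).filter
              (fun E => ¬(j ∈ E ∧ i ∉ E) ∧ ¬(i ∈ E ∧ j ∉ E)), c E := by
    intro c
    have h1 := Finset.sum_filter_add_sum_filter_not (KSets n (k-1))
      (fun E => j ∈ E ∧ i ∉ E) c
    have h2 := Finset.sum_filter_add_sum_filter_not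
      ((KSets n (k-1)).filter (fun E => ¬(j ∈ E ∧ i ∉ E)))
      (fun E => i ∈ E ∧ j ∉ E) c
    have e1 : ((KSets n (k-1)).filter (fun E => ¬(j ∈ E ∧ i ∉ E))).filter
        (fun E => i ∈ E ∧ j ∉ E)
        = (KSets n (k-1)).filter (fun E => i ∈ E ∧ j ∉ E) := by
      rw [Finset.filter_filter]
      exact Finset.filter_congr (fun E _ => by tauto)
    have e2 : ((KSets n (k-1)).filter (fun E => ¬(j ∈ E ∧ i ∉ E))).filter
        (fun E => ¬(i ∈ E ∧ j ∉ E))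
        = (KSets n (k-1)).filter (fun E => ¬(j ∈ E ∧ i ∉ E) ∧ ¬(i ∈ E ∧ j ∉ E)) := by
      rw [Finset.filter_filter]
    rw [e1, e2] at h2
    omega
  rw [split (fun E => (codeg 𝓐 E).choose 2),
    split (fun E => (codeg (shiftFam i j 𝓐) E).choose 2)]
  have hR : ∑ E ∈ (KSets n (k-1)).filter
        (fun E => ¬(j ∈ E ∧ i ∉ E) ∧ ¬(i ∈ E ∧ j ∉ E)),
        (codeg 𝓐 E).choose 2
      = ∑ E ∈ (KSets n (k-1)).filter
        (fun E => ¬(j ∈ E ∧ i ∉ E) ∧ ¬(i ∈ E ∧ j ∉ E)),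
        (codeg (shiftFam i j 𝓐) E).choose 2 := by
    refine Finset.sum_congr rfl fun E hE => ?_
    rw [Finset.mem_filter] at hE
    rw [codeg_shiftFam_eq hji (by tauto)]
  have hQ : ∀ c : Finset ℕ → ℕ,
      ∑ E ∈ (KSets n (k-1)).filter (fun E => i ∈ E ∧ j ∉ E), c E
        = ∑ E ∈ (KSets n (k-1)).filter (fun E => j ∈ E ∧ i ∉ E),
            c (insert i (E.erase j)) := by
    intro c
    refine Finset.sum_nbij' (i := fun E => insert j (E.erase i))
      (j := fun E => insert i (E.erase j)) ?_ ?_ ?_ ?_ ?_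
    · intro E hE
      rw [Finset.mem_filter] at hE ⊢
      obtain ⟨hEK, hiE, hjE⟩ := hE
      rw [KSets, Finset.mem_powersetCard] at hEK ⊢
      refine ⟨⟨Finset.insert_subset hjIv ((Finset.erase_subset _ _).trans hEK.1), ?_⟩,
        Finset.mem_insert_self j _, ?_⟩
      · rw [Finset.card_insert_of_notMem (fun h => hjE (Finset.mem_of_mem_erase h)),
          Finset.card_erase_of_mem hiE, hEK.2]
        have : 1 ≤ E.card := Finset.card_pos.mpr ⟨i, hiE⟩
        omega
      · intro h
        rcases Finset.mem_insert.mp h with h' | h'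
        · exact hji h'
        · exact (Finset.mem_erase.mp h').1 rfl
    · intro E hE
      rw [Finset.mem_filter] at hE ⊢
      obtain ⟨hEK, hjE, hiE⟩ := hE
      rw [KSets, Finset.mem_powersetCard] at hEK ⊢
      refine ⟨⟨Finset.insert_subset hiIv ((Finset.erase_subset _ _).trans hEK.1), ?_⟩,
        Finset.mem_insert_self i _, not_mem_shift hji⟩
      rw [Finset.card_insert_of_notMem (fun h => hiE (Finset.mem_of_mem_erase h)),
        Finset.card_erase_of_mem hjE, hEK.2]
      have : 1 ≤ E.card := Finset.card_pos.mpr ⟨j, hjE⟩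
      omega
    · intro E hE
      rw [Finset.mem_filter] at hE
      exact recover (fun h => hji h.symm) hE.2.1 hE.2.2
    · intro E hE
      rw [Finset.mem_filter] at hE
      exact recover hji hE.2.1 hE.2.2
    · intro E hE
      rw [Finset.mem_filter] at hE
      rw [recover (fun h => hji h.symm) hE.2.1 hE.2.2]
  rw [hQ (fun E => (codeg 𝓐 E).choose 2),
    hQ (fun E => (codeg (shiftFam i j 𝓐) E).choose 2), hR]
  have hPQ : ∑ E ∈ (KSets n (k-1)).filter (fun E => j ∈ E ∧ i ∉ E),
        ((codeg 𝓐 E).choose 2 + (codeg 𝓐 (insert i (E.erase j))).choose 2)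
      ≤ ∑ E ∈ (KSets n (k-1)).filter (fun E => j ∈ E ∧ i ∉ E),
        ((codeg (shiftFam i j 𝓐) E).choose 2
          + (codeg (shiftFam i j 𝓐) (insert i (E.erase j))).choose 2) := by
    refine Finset.sum_le_sum fun E hE => ?_
    rw [Finset.mem_filter] at hE
    exact key_ineq hji hE.2.1 hE.2.2
  rw [Finset.sum_add_distrib, Finset.sum_add_distrib] at hPQ
  omega
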